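/- In the Solomon simultaneous-report mechanism with state α, every subgame perfect equilibrium in which the true mother a breaks challenge-stage ties by asserting α results in the outcome M_p = M_r = α, i.e., the baby is allocated to the true mother; in particular truthful revelation is the unique SPE outcome. -/
import Mathlib


inductive SolAgent | a | b
deriving DecidableEq

inductive SolOutcome | A | B | C
deriving DecidableEq

inductive SolMsg | α | β
deriving DecidableEq

open SolAgent SolOutcome SolMsg

def SolAgent.other : SolAgent → SolAgent
  | SolAgent.a => SolAgent.b
  | SolAgent.b => SolAgent.a

/-- Allocation implemented by an agreed report: A if α, B if β. -/
def outcomeOf : SolMsg → SolOutcome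
  | SolMsg.α => SolOutcome.A
  | SolMsg.β => SolOutcome.B

/-- A strategy in the two-stage SR mechanism: a first-stage report when proposer,
a first-stage report when responder, and a challenge-stage message as a function of
the responder's first-stage report. -/
structure SolStrategy where
  repP : SolMsg
  repR : SolMsg
  chal : SolMsg → SolMsg

/-- Payoff to agent `i` when the proposer is `P` with challenge strategy `chal`,
given first-stage reports `Mp` (proposer) and `Mr` (responder).  Agreement implements
the agreed allocation with no fines; disagreement fines both `F`, then if the proposer's
challenge message matches `Mr` the allocation `outcomeOf Mr` is implemented and the
responder's fine is refunded; otherwise `C` is implemented and both keep their fines. -/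
def solPayoff (u : SolAgent → SolOutcome → ℝ) (F : ℝ) (P : SolAgent)
    (chal : SolMsg → SolMsg) (i : SolAgent) (Mp Mr : SolMsg) : ℝ :=
  if Mp = Mr then u i (outcomeOf Mr)
  else if chal Mr = Mr then u i (outcomeOf Mr) - (if i = P then F else 0)
  else u i SolOutcome.C - F

/-- Subgame perfect equilibrium: for each possible proposer assignment `P`, the
proposer's challenge message is optimal in every challenge subgame, and each agent's
first-stage report is optimal given the other's report and the challenge continuation. -/
def SolSPE (u : SolAgent → SolOutcome → ℝ) (F : ℝ) (σ : SolAgent → SolStrategy) : Prop :=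
  ∀ P : SolAgent,
    (∀ Mr m : SolMsg,
      (if m = Mr then u P (outcomeOf Mr) - F else u P SolOutcome.C - F) ≤
        (if (σ P).chal Mr = Mr then u P (outcomeOf Mr) - F else u P SolOutcome.C - F)) ∧
    (∀ m : SolMsg,
      solPayoff u F P (σ P).chal P m ((σ P.other).repR) ≤
        solPayoff u F P (σ P).chal P ((σ P).repP) ((σ P.other).repR)) ∧
    (∀ m : SolMsg,
      solPayoff u F P (σ P).chal P.other ((σ P).repP) m ≤
        solPayoff u F P (σ P).chal P.other ((σ P).repP) ((σ P.other).repR))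

/-- with state α, in every subgame perfect equilibrium in which the true
mother `a` resolves her challenge-stage behaviour by always asserting α, both first-stage
reports equal α (for either proposer assignment), so the baby is allocated to the true
mother: truthful revelation is the unique SPE outcome. -/
theorem solomon_SPE_outcome_unique
    (u : SolAgent → SolOutcome → ℝ) (F : ℝ) (hF : 0 < F)
    (haAC : u SolAgent.a SolOutcome.C < u SolAgent.a SolOutcome.A)
    (haCB : u SolAgent.a SolOutcome.B < u SolAgent.a SolOutcome.C)
    (hbBA : u SolAgent.b SolOutcome.A < u SolAgent.b SolOutcome.B)
    (hbAC : u SolAgent.b SolOutcome.A = u SolAgent.b SolOutcome.C)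
    (hFa : u SolAgent.a SolOutcome.B < u SolAgent.a SolOutcome.C - F)
    (hFb : F < u SolAgent.b SolOutcome.B - u SolAgent.b SolOutcome.A)
    (σ : SolAgent → SolStrategy)
    (hSPE : SolSPE u F σ)
    -- a's challenge-stage tie-breaking: the true mother always asserts the true state α
    (hachal : ∀ Mr : SolMsg, (σ SolAgent.a).chal Mr = SolMsg.α) :
    ∀ P : SolAgent,
      (σ P).repP = SolMsg.α ∧ (σ P.other).repR = SolMsg.α ∧
        outcomeOf ((σ P.other).repR) = SolOutcome.A := by
  obtain ⟨ha1, ha2, ha3⟩ := hSPE SolAgent.a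
  obtain ⟨hb1, hb2, hb3⟩ := hSPE SolAgent.b
  have hcβ : (σ SolAgent.b).chal SolMsg.β = SolMsg.β := by
    by_contra h
    have := hb1 SolMsg.β SolMsg.β
    simp [h, outcomeOf, ← hbAC] at this
    linarith
  intro P
  cases P with
  | a =>
    rcases hr : (σ SolAgent.b).repR with _ | _
    · rcases hp : (σ SolAgent.a).repP with _ | _
      · simp [SolAgent.other, hr, outcomeOf]
      · exfalso
        have := ha3 SolMsg.β
        simp [SolAgent.other, solPayoff, hp, hr, hachal, outcomeOf, ← hbAC] at this
        linarith
    · exfalso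
      rcases hp : (σ SolAgent.a).repP with _ | _
      · have := ha3 SolMsg.α
        simp [SolAgent.other, solPayoff, hp, hr, hachal, outcomeOf, ← hbAC] at this
        linarith
      · have := ha2 SolMsg.α
        simp [SolAgent.other, solPayoff, hp, hr, hachal, outcomeOf] at this
        linarith
  | b =>
    rcases hr : (σ SolAgent.a).repR with _ | _
    · rcases hp : (σ SolAgent.b).repP with _ | _
      · simp [SolAgent.other, hr, outcomeOf]
      · exfalso
        have := hb2 SolMsg.α
        by_cases hcα : (σ SolAgent.b).chal SolMsg.α = SolMsg.α <;>
          simp [SolAgent.other, solPayoff, hp, hr, hcα, outcomeOf, ← hbAC] at this <;>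
          linarith
    · exfalso
      rcases hp : (σ SolAgent.b).repP with _ | _
      · have := hb3 SolMsg.α
        simp [SolAgent.other, solPayoff, hp, hr, hcβ, outcomeOf] at this
        linarith
      · have := hb3 SolMsg.α
        by_cases hcα : (σ SolAgent.b).chal SolMsg.α = SolMsg.α <;>
          simp [SolAgent.other, solPayoff, hp, hr, hcα, outcomeOf] at this <;>
          linarith
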